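/- Let ε ∈ (0, 1/2) and r₀ > 0. Let q : (0,r₀) → ℝ be continuous with lim_{r→0⁺} r²·q(r) = 0, and let W be a radial, twice continuously differentiable solution of −ΔW = q(|x|)·W on the punctured ball B(0,r₀) \ {0} in ℝ³ such that lim_{|x|→0⁺} |x|^{1−ε}·W(x) = 0. Then there exist constants r₁ ∈ (0,r₀) and C₁ > 0 such that |W(x)| ≤ C₁·|x|^{−ε} for all x with 0 < |x| < r₁. -/

import Mathlib

open Set Filter

section aux
open MeasureTheory intervalIntegral

lemma rpow_ii {s b : ℝ} (c : ℝ) (hs : 0 < s) (hsb : s ≤ b) :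
    IntervalIntegrable (fun σ : ℝ => σ ^ c) volume s b :=
  intervalIntegrable_rpow (Or.inr (by
    rw [uIcc_of_le hsb, mem_Icc]; rintro ⟨h0, -⟩; exact absurd h0 (not_le.2 hs)))

lemma int_rpow_le_neg {s b c : ℝ} (hs : 0 < s) (hsb : s ≤ b) (hc : c + 1 < 0) :
    ∫ σ in s..b, σ ^ c ≤ s ^ (c + 1) / (-(c + 1)) := by
  rw [integral_rpow (Or.inr ⟨by intro h; rw [h] at hc; norm_num at hc, by
    rw [uIcc_of_le hsb, mem_Icc]; rintro ⟨h0, -⟩; exact absurd h0 (not_le.2 hs)⟩)]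
  have hb0 : 0 ≤ b ^ (c + 1) := Real.rpow_nonneg (hs.le.trans hsb) _
  have h1 : (b ^ (c+1) - s ^ (c+1)) / (c+1) = (s ^ (c+1) - b ^ (c+1)) / (-(c+1)) := by
    rw [← neg_div_neg_eq, neg_sub]
  rw [h1]
  exact (div_le_div_iff_of_pos_right (by linarith)).2 (by linarith)
lemma int_rpow_le_pos {r t c : ℝ} (hr : 0 < r) (hrt : r ≤ t) (hc : (-1:ℝ) < c) :
    ∫ σ in r..t, σ ^ c ≤ t ^ (c + 1) / (c + 1) := by
  rw [integral_rpow (Or.inl hc)]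
  have : 0 ≤ r ^ (c + 1) := Real.rpow_nonneg hr.le _
  exact (div_le_div_iff_of_pos_right (by linarith)).2 (by linarith)

lemma ode_bound (ε r₁ : ℝ) (hε : 0 < ε) (hε2 : ε < 1/2) (hr₁ : 0 < r₁) (hr₁1 : r₁ ≤ 1)
    (u v g : ℝ → ℝ)
    (huv : ∀ s ∈ Ioc (0:ℝ) r₁, HasDerivAt u (v s) s)
    (hvg : ∀ s ∈ Ioc (0:ℝ) r₁, HasDerivAt v (g s) s)
    (hgc : ContinuousOn g (Ioc (0:ℝ) r₁))
    (hgb : ∀ s ∈ Ioc (0:ℝ) r₁, |g s| ≤ (ε * (1 - ε) / 2) * (s ^ (-(2:ℝ)) * |u s|))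
    (hub : ∀ s ∈ Ioc (0:ℝ) r₁, |u s| ≤ s ^ ε) :
    ∀ t ∈ Ioc (0:ℝ) r₁, |u t| ≤ (2 * (|v r₁| + 1)) * t ^ (1 - ε) := by
  have hε1 : (0:ℝ) < 1 - ε := by linarith
  set δ := ε * (1 - ε) / 2 with hδ
  have hδ0 : 0 < δ := div_pos (mul_pos hε hε1) two_pos
  set B := |v r₁| + 1 with hB
  have hB1 : (1:ℝ) ≤ B := le_add_of_nonneg_left (abs_nonneg _)
  have hB0 : (0:ℝ) < B := lt_of_lt_of_le one_pos hB1
  have step : ∀ A D : ℝ, 0 ≤ A → 0 ≤ D →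
      (∀ s ∈ Ioc (0:ℝ) r₁, |u s| ≤ A * s ^ (1 - ε) + D * s ^ ε) →
      ∀ t ∈ Ioc (0:ℝ) r₁, |u t| ≤ (B + A / 2) * t ^ (1 - ε) + D / 2 * t ^ ε := by
    intro A D hA hD hbound t ht
    -- bound on |v|
    have hvb : ∀ s ∈ Ioc (0:ℝ) r₁,
        |v s| ≤ B + (δ * A / ε) * s ^ (-ε) + (δ * D / (1 - ε)) * s ^ (ε - 1) := by
      intro s hs
      have hs0 : 0 < s := hs.1
      have hsr : s ≤ r₁ := hs.2
      have hsub : Icc s r₁ ⊆ Ioc (0:ℝ) r₁ := fun σ hσ => ⟨lt_of_lt_of_le hs0 hσ.1, hσ.2⟩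
      have hgint : IntervalIntegrable g volume s r₁ :=
        (hgc.mono (by rw [uIcc_of_le hsr]; exact hsub)).intervalIntegrable
      have hftc : ∫ σ in s..r₁, g σ = v r₁ - v s :=
        integral_eq_sub_of_hasDerivAt
          (fun σ hσ => hvg σ (hsub (by rwa [uIcc_of_le hsr] at hσ))) hgint
      have hpt : ∀ σ ∈ Icc s r₁, |g σ| ≤ δ * A * σ ^ (-1 - ε) + δ * D * σ ^ (ε - 2) := by
        intro σ hσ
        have hσ0 : 0 < σ := lt_of_lt_of_le hs0 hσ.1
        have h2 := hbound σ (hsub hσ)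
        have h3 : σ ^ (-(2:ℝ)) * |u σ| ≤ σ ^ (-(2:ℝ)) * (A * σ ^ (1-ε) + D * σ ^ ε) :=
          mul_le_mul_of_nonneg_left h2 (Real.rpow_nonneg hσ0.le _)
        have e1 : σ ^ (-(2:ℝ)) * σ ^ (1-ε) = σ ^ (-1-ε) := by
          rw [← Real.rpow_add hσ0]; congr 1; ring
        have e2 : σ ^ (-(2:ℝ)) * σ ^ ε = σ ^ (ε-2) := by
          rw [← Real.rpow_add hσ0]; congr 1; ring
        calc |g σ| ≤ δ * (σ ^ (-(2:ℝ)) * |u σ|) := hgb σ (hsub hσ)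
          _ ≤ δ * (σ ^ (-(2:ℝ)) * (A * σ ^ (1-ε) + D * σ ^ ε)) :=
              mul_le_mul_of_nonneg_left h3 hδ0.le
          _ = δ * A * (σ ^ (-(2:ℝ)) * σ ^ (1-ε)) + δ * D * (σ ^ (-(2:ℝ)) * σ ^ ε) := by ring
          _ = δ * A * σ ^ (-1 - ε) + δ * D * σ ^ (ε - 2) := by rw [e1, e2]
      have hhint : IntervalIntegrable
          (fun σ => δ * A * σ ^ (-1 - ε) + δ * D * σ ^ (ε - 2)) volume s r₁ :=
        ((rpow_ii _ hs0 hsr).const_mul _).add ((rpow_ii _ hs0 hsr).const_mul _)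
      have habs : |∫ σ in s..r₁, g σ| ≤ ∫ σ in s..r₁, |g σ| := abs_integral_le_integral_abs hsr
      have hmono : (∫ σ in s..r₁, |g σ|)
          ≤ ∫ σ in s..r₁, (δ * A * σ ^ (-1 - ε) + δ * D * σ ^ (ε - 2)) :=
        integral_mono_on hsr hgint.abs hhint hpt
      have hint2 : (∫ σ in s..r₁, (δ * A * σ ^ (-1 - ε) + δ * D * σ ^ (ε - 2)))
          = δ * A * (∫ σ in s..r₁, σ ^ (-1 - ε)) + δ * D * (∫ σ in s..r₁, σ ^ (ε - 2)) := by
        rw [integral_add ((rpow_ii _ hs0 hsr).const_mul _) ((rpow_ii _ hs0 hsr).const_mul _),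
          intervalIntegral.integral_const_mul, intervalIntegral.integral_const_mul]
      have hI1 : (∫ σ in s..r₁, σ ^ (-1 - ε)) ≤ s ^ (-ε) / ε := by
        have h := int_rpow_le_neg hs0 hsr (show (-1 - ε) + 1 < 0 by linarith)
        rw [show (-1 - ε) + 1 = -ε by ring] at h
        rw [show -(-ε) = ε by ring] at h
        exact h
      have hI2 : (∫ σ in s..r₁, σ ^ (ε - 2)) ≤ s ^ (ε - 1) / (1 - ε) := by
        have h := int_rpow_le_neg hs0 hsr (show (ε - 2) + 1 < 0 by linarith)
        rw [show (ε - 2) + 1 = ε - 1 by ring] at h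
        rw [show -(ε - 1) = 1 - ε by ring] at h
        exact h
      have hvrs : |v r₁ - v s| ≤ δ * A * (s ^ (-ε) / ε) + δ * D * (s ^ (ε-1) / (1-ε)) := by
        rw [← hftc]
        refine habs.trans (hmono.trans ?_)
        rw [hint2]
        have g1 : δ * A * (∫ σ in s..r₁, σ ^ (-1 - ε)) ≤ δ * A * (s ^ (-ε) / ε) :=
          mul_le_mul_of_nonneg_left hI1 (by positivity)
        have g2 : δ * D * (∫ σ in s..r₁, σ ^ (ε - 2)) ≤ δ * D * (s ^ (ε-1) / (1-ε)) :=
          mul_le_mul_of_nonneg_left hI2 (by positivity)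
        linarith
      have hvs : |v s| ≤ |v r₁| + |v r₁ - v s| := by
        calc |v s| = |v r₁ - (v r₁ - v s)| := by congr 1; ring
          _ ≤ |v r₁| + |v r₁ - v s| := abs_sub _ _
      have e3 : δ * A * (s ^ (-ε) / ε) = (δ * A / ε) * s ^ (-ε) := by ring
      have e4 : δ * D * (s ^ (ε-1) / (1-ε)) = (δ * D / (1-ε)) * s ^ (ε-1) := by ring
      rw [hB]
      linarith [hvrs, hvs, e3 ▸ (le_refl (δ * A * (s ^ (-ε) / ε)))]
    -- integral bound for u
    have key : ∀ r ∈ Ioo (0:ℝ) t,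
        |u t| ≤ r ^ ε + (B * t + A/2 * t ^ (1-ε) + D/2 * t ^ ε) := by
      intro r hr
      have hr0 : 0 < r := hr.1
      have hrt : r ≤ t := hr.2.le
      have hsub : Icc r t ⊆ Ioc (0:ℝ) r₁ := fun σ hσ => ⟨lt_of_lt_of_le hr0 hσ.1, hσ.2.trans ht.2⟩
      have hvcont : ContinuousOn v (Icc r t) := fun σ hσ =>
        ((hvg σ (hsub hσ)).continuousAt).continuousWithinAt
      have hvint : IntervalIntegrable v volume r t :=
        (hvcont.mono (by rw [uIcc_of_le hrt])).intervalIntegrable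
      have hftc : ∫ s in r..t, v s = u t - u r :=
        integral_eq_sub_of_hasDerivAt
          (fun σ hσ => huv σ (hsub (by rwa [uIcc_of_le hrt] at hσ))) hvint
      have hmaj : ∀ σ ∈ Icc r t,
          |v σ| ≤ B + (δ*A/ε) * σ ^ (-ε) + (δ*D/(1-ε)) * σ ^ (ε-1) :=
        fun σ hσ => hvb σ (hsub hσ)
      have hmajint : IntervalIntegrable
          (fun σ => B + (δ*A/ε) * σ ^ (-ε) + (δ*D/(1-ε)) * σ ^ (ε-1)) volume r t :=
        ((_root_.intervalIntegrable_const).add ((rpow_ii _ hr0 hrt).const_mul _)).add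
          ((rpow_ii _ hr0 hrt).const_mul _)
      have h1 : |u t - u r| ≤ ∫ σ in r..t,
          (B + (δ*A/ε) * σ ^ (-ε) + (δ*D/(1-ε)) * σ ^ (ε-1)) := by
        rw [← hftc]
        exact (abs_integral_le_integral_abs hrt).trans
          (integral_mono_on hrt hvint.abs hmajint hmaj)
      have h2 : (∫ σ in r..t, (B + (δ*A/ε) * σ ^ (-ε) + (δ*D/(1-ε)) * σ ^ (ε-1)))
          = B * (t - r) + (δ*A/ε) * (∫ σ in r..t, σ ^ (-ε))
            + (δ*D/(1-ε)) * (∫ σ in r..t, σ ^ (ε-1)) := by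
        rw [integral_add ((_root_.intervalIntegrable_const).add ((rpow_ii _ hr0 hrt).const_mul _))
            ((rpow_ii _ hr0 hrt).const_mul _),
          integral_add (_root_.intervalIntegrable_const) ((rpow_ii _ hr0 hrt).const_mul _),
          intervalIntegral.integral_const, intervalIntegral.integral_const_mul, intervalIntegral.integral_const_mul, smul_eq_mul, mul_comm (t - r) B]
      have hJ1 : (∫ σ in r..t, σ ^ (-ε)) ≤ t ^ (1-ε) / (1-ε) := by
        have h := int_rpow_le_pos hr0 hrt (show (-1:ℝ) < -ε by linarith)
        rw [show -ε + 1 = 1 - ε by ring] at h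
        exact h
      have hJ2 : (∫ σ in r..t, σ ^ (ε-1)) ≤ t ^ ε / ε := by
        have h := int_rpow_le_pos hr0 hrt (show (-1:ℝ) < ε-1 by linarith)
        rw [show ε - 1 + 1 = ε by ring] at h
        exact h
      have hut : |u t| ≤ |u r| + |u t - u r| := by
        calc |u t| = |u r + (u t - u r)| := by congr 1; ring
          _ ≤ |u r| + |u t - u r| := abs_add_le _ _
      have hur : |u r| ≤ r ^ ε := hub r ⟨hr0, hrt.trans ht.2⟩
      have e1 : δ * A / ε * (t ^ (1-ε) / (1-ε)) = A/2 * t ^ (1-ε) := by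
        rw [hδ]; field_simp
      have e2 : δ * D / (1-ε) * (t ^ ε / ε) = D/2 * t ^ ε := by
        rw [hδ]; field_simp
      have g1 : (δ*A/ε) * (∫ σ in r..t, σ ^ (-ε)) ≤ A/2 * t ^ (1-ε) := by
        calc (δ*A/ε) * (∫ σ in r..t, σ ^ (-ε)) ≤ (δ*A/ε) * (t ^ (1-ε) / (1-ε)) :=
              mul_le_mul_of_nonneg_left hJ1 (by positivity)
          _ = A/2 * t ^ (1-ε) := e1
      have g2 : (δ*D/(1-ε)) * (∫ σ in r..t, σ ^ (ε-1)) ≤ D/2 * t ^ ε := by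
        calc (δ*D/(1-ε)) * (∫ σ in r..t, σ ^ (ε-1)) ≤ (δ*D/(1-ε)) * (t ^ ε / ε) :=
              mul_le_mul_of_nonneg_left hJ2 (by positivity)
          _ = D/2 * t ^ ε := e2
      have g0 : B * (t - r) ≤ B * t := by nlinarith
      rw [h2] at h1
      calc |u t| ≤ |u r| + |u t - u r| := hut
        _ ≤ r ^ ε + ((B * (t - r) + (δ*A/ε) * (∫ σ in r..t, σ ^ (-ε)))
            + (δ*D/(1-ε)) * (∫ σ in r..t, σ ^ (ε-1))) := add_le_add hur h1
        _ ≤ r ^ ε + ((B * t + A/2 * t ^ (1-ε)) + D/2 * t ^ ε) :=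
            add_le_add (le_refl _) (add_le_add (add_le_add g0 g1) g2)
        _ = r ^ ε + (B * t + A/2 * t ^ (1-ε) + D/2 * t ^ ε) := by ring
    have hlim : |u t| ≤ B * t + A/2 * t ^ (1-ε) + D/2 * t ^ ε := by
      refine le_of_forall_pos_le_add fun η hη => ?_
      set r := min (t/2) (η ^ (ε⁻¹)) with hrdef
      have ht0 : 0 < t := ht.1
      have hr0 : 0 < r := lt_min (by linarith) (Real.rpow_pos_of_pos hη _)
      have hrt : r < t := lt_of_le_of_lt (min_le_left _ _) (by linarith)
      have hrε : r ^ ε ≤ η := by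
        have h1 : r ^ ε ≤ (η ^ (ε⁻¹)) ^ ε :=
          Real.rpow_le_rpow hr0.le (min_le_right _ _) hε.le
        rwa [← Real.rpow_mul hη.le, inv_mul_cancel₀ (ne_of_gt hε), Real.rpow_one] at h1
      have := key r ⟨hr0, hrt⟩
      linarith
    have htle : t ≤ t ^ (1-ε) := by
      nth_rewrite 1 [← Real.rpow_one t]
      exact Real.rpow_le_rpow_of_exponent_ge ht.1 (ht.2.trans hr₁1) (by linarith)
    have hBt : B * t ≤ B * t ^ (1-ε) := mul_le_mul_of_nonneg_left htle hB0.le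
    calc |u t| ≤ B * t + A/2 * t ^ (1-ε) + D/2 * t ^ ε := hlim
      _ ≤ B * t ^ (1-ε) + A/2 * t ^ (1-ε) + D/2 * t ^ ε :=
          add_le_add (add_le_add hBt le_rfl) le_rfl
      _ = (B + A/2) * t ^ (1-ε) + D/2 * t ^ ε := by ring
  have ind : ∀ n : ℕ, ∀ t ∈ Ioc (0:ℝ) r₁,
      |u t| ≤ (2*B) * t ^ (1-ε) + (1/2:ℝ)^n * t ^ ε := by
    intro n
    induction n with
    | zero =>
      intro t ht
      have h0 : 0 ≤ 2*B * t^(1-ε) :=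
        mul_nonneg (by linarith) (Real.rpow_nonneg ht.1.le _)
      have := hub t ht
      simp only [pow_zero, one_mul]
      linarith
    | succ n ih =>
      intro t ht
      have hstep := step (2*B) ((1/2:ℝ)^n) (by linarith) (by positivity) ih t ht
      calc |u t| ≤ (B + 2*B/2) * t^(1-ε) + (1/2:ℝ)^n/2 * t^ε := hstep
        _ = (2*B) * t^(1-ε) + (1/2:ℝ)^(n+1) * t^ε := by rw [pow_succ]; ring
  intro t ht
  have hlim2 : Tendsto (fun n : ℕ => (2*B) * t ^ (1-ε) + (1/2:ℝ)^n * t ^ ε) atTop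
      (nhds ((2*B) * t^(1-ε) + 0)) := by
    refine tendsto_const_nhds.add ?_
    have := (tendsto_pow_atTop_nhds_zero_of_lt_one (by norm_num : (0:ℝ) ≤ 1/2)
      (by norm_num : (1/2:ℝ) < 1)).mul_const (t ^ ε)
    simpa using this
  have hfinal := ge_of_tendsto' hlim2 (fun n => ind n t ht)
  rw [add_zero] at hfinal
  exact hfinal

variable {F : Type*} [NormedAddCommGroup F] [InnerProductSpace ℝ F]

lemma hasFDerivAt_norm' {x : F} (hx : x ≠ 0) :
    HasFDerivAt (fun y : F => ‖y‖) (‖x‖⁻¹ • innerSL ℝ x) x := by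
  have hN : (0:ℝ) < ‖x‖ := norm_pos_iff.2 hx
  have h1 : HasFDerivAt (fun y : F => ‖y‖ ^ 2) (2 • (innerSL ℝ x)) x :=
    (hasStrictFDerivAt_norm_sq x).hasFDerivAt
  have h2 : HasDerivAt Real.sqrt (1 / (2 * Real.sqrt (‖x‖ ^ 2))) (‖x‖ ^ 2) :=
    Real.hasDerivAt_sqrt (by positivity)
  have h3 := h2.comp_hasFDerivAt x h1
  rw [show Real.sqrt ∘ (fun y : F => ‖y‖ ^ 2) = fun y : F => ‖y‖ from
    funext fun y => Real.sqrt_sq (norm_nonneg y)] at h3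
  refine h3.congr_fderiv ?_
  rw [Real.sqrt_sq (norm_nonneg x)]
  ext v
  simp only [ContinuousLinearMap.coe_smul', Pi.smul_apply, ContinuousLinearMap.smul_apply]
  simp only [smul_eq_mul]; ring

end aux

/-- The Euclidean Laplacian on `ℝ³`: the sum of the second partial derivatives
along the coordinate directions. -/
noncomputable def laplacian (f : EuclideanSpace ℝ (Fin 3) → ℝ)
    (x : EuclideanSpace ℝ (Fin 3)) : ℝ :=
  ∑ i : Fin 3,
    fderiv ℝ (fun y => fderiv ℝ f y (EuclideanSpace.single i 1)) x
      (EuclideanSpace.single i 1)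

abbrev E3 := EuclideanSpace ℝ (Fin 3)

lemma inner_single_one (y : E3) (i : Fin 3) : (innerSL ℝ y) (EuclideanSpace.single i (1:ℝ)) = y i := by
  simp [EuclideanSpace.inner_single_right]

lemma radial_laplacian (W : E3 → ℝ) (w d1 : ℝ → ℝ) (r₀ : ℝ)
    (hwW : ∀ y : E3, y ≠ 0 → W y = w ‖y‖)
    (hd1 : ∀ r ∈ Ioo (0:ℝ) r₀, HasDerivAt w (d1 r) r)
    {x : E3} (hx : x ≠ 0) (hxr : ‖x‖ < r₀)
    {d2x : ℝ} (hd2 : HasDerivAt d1 d2x ‖x‖) :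
    laplacian W x = d2x + 2 * d1 ‖x‖ / ‖x‖ := by
  have hN : (0:ℝ) < ‖x‖ := norm_pos_iff.2 hx
  set S : Set E3 := {y : E3 | y ≠ 0 ∧ ‖y‖ < r₀} with hSdef
  have hS : IsOpen S := by
    have : S = (Set.singleton (0:E3))ᶜ ∩ (fun y : E3 => ‖y‖) ⁻¹' Iio r₀ := by
      ext y; simp [hSdef, Set.singleton, and_comm]
    rw [this]
    exact (isOpen_compl_singleton).inter (isOpen_Iio.preimage continuous_norm)
  have hxS : x ∈ S := ⟨hx, hxr⟩
  -- first derivative of W on S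
  have hWd : ∀ y ∈ S, HasFDerivAt W (d1 ‖y‖ • (‖y‖⁻¹ • innerSL ℝ y)) y := by
    intro y hy
    have h0 : HasFDerivAt (w ∘ fun y : E3 => ‖y‖) (d1 ‖y‖ • (‖y‖⁻¹ • innerSL ℝ y)) y :=
      (hd1 ‖y‖ ⟨norm_pos_iff.2 hy.1, hy.2⟩).comp_hasFDerivAt y (hasFDerivAt_norm' hy.1)
    apply h0.congr_of_eventuallyEq
    filter_upwards [IsOpen.mem_nhds isOpen_compl_singleton
      (by simpa [Set.mem_compl_iff, Set.singleton] using hy.1 : y ∈ (Set.singleton (0:E3))ᶜ)] with z hz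
    exact hwW z (by simpa [Set.singleton] using hz)
  -- value of the first directional derivative on S
  have hg : ∀ i : Fin 3, ∀ y ∈ S,
      fderiv ℝ W y (EuclideanSpace.single i 1) = d1 ‖y‖ * (‖y‖⁻¹ * y i) := by
    intro i y hy
    rw [(hWd y hy).fderiv]
    simp [inner_single_one, smul_eq_mul]
  -- the explicit model function and its derivative
  have hsq : ∑ i : Fin 3, x i * x i = ‖x‖ ^ 2 := by
    have h := EuclideanSpace.norm_eq x
    have : ‖x‖ ^ 2 = ∑ i : Fin 3, ‖x i‖ ^ 2 := by
      rw [h, Real.sq_sqrt (by positivity)]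
    rw [this]
    congr 1; funext i; rw [Real.norm_eq_abs, sq_abs, sq]
  set n' : E3 →L[ℝ] ℝ := ‖x‖⁻¹ • innerSL ℝ x with hn'
  have key : ∀ i : Fin 3,
      fderiv ℝ (fun y => fderiv ℝ W y (EuclideanSpace.single i 1)) x (EuclideanSpace.single i 1)
      = d1 ‖x‖ * (‖x‖⁻¹ * 1 + (x i) * (-(‖x‖^2)⁻¹ * (‖x‖⁻¹ * x i)))
        + (‖x‖⁻¹ * x i) * (d2x * (‖x‖⁻¹ * x i)) := by
    intro i
    set Pc : E3 →L[ℝ] ℝ := innerSL ℝ (EuclideanSpace.single i (1:ℝ)) with hPc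
    have hPcval : ∀ y : E3, Pc y = y i := by
      intro y; simp [hPc, EuclideanSpace.inner_single_left]
    have hA : HasFDerivAt (d1 ∘ fun y : E3 => ‖y‖) (d2x • n') x :=
      hd2.comp_hasFDerivAt x (hasFDerivAt_norm' hx)
    have hC : HasFDerivAt (fun y : E3 => ‖y‖⁻¹) (-(‖x‖^2)⁻¹ • n') x := by
      have h := (hasDerivAt_inv (ne_of_gt hN)).comp_hasFDerivAt x (hasFDerivAt_norm' hx)
      exact h
    have hCP : HasFDerivAt (fun y : E3 => ‖y‖⁻¹ * Pc y)
        (‖x‖⁻¹ • (Pc : E3 →L[ℝ] ℝ) + Pc x • (-(‖x‖^2)⁻¹ • n')) x :=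
      hC.mul Pc.hasFDerivAt
    have hΦ : HasFDerivAt (fun y : E3 => (d1 ∘ fun y : E3 => ‖y‖) y * (‖y‖⁻¹ * Pc y))
        ((d1 ∘ fun y : E3 => ‖y‖) x • (‖x‖⁻¹ • (Pc : E3 →L[ℝ] ℝ) + Pc x • (-(‖x‖^2)⁻¹ • n'))
          + (‖x‖⁻¹ * Pc x) • (d2x • n')) x := hA.mul hCP
    have heq : (fun y => fderiv ℝ W y (EuclideanSpace.single i 1)) =ᶠ[nhds x]
        (fun y : E3 => (d1 ∘ fun y : E3 => ‖y‖) y * (‖y‖⁻¹ * Pc y)) := by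
      filter_upwards [hS.mem_nhds hxS] with y hy
      rw [hg i y hy, hPcval y]; rfl
    rw [heq.fderiv_eq, hΦ.fderiv]
    have hn'e : ∀ i : Fin 3, n' (EuclideanSpace.single i (1:ℝ)) = ‖x‖⁻¹ * x i := by
      intro j; simp [hn', inner_single_one, smul_eq_mul]
    have hPce : Pc (EuclideanSpace.single i (1:ℝ)) = 1 := by
      rw [hPcval]; simp [EuclideanSpace.single_apply]
    simp only [ContinuousLinearMap.add_apply, ContinuousLinearMap.coe_smul',
      Pi.smul_apply, ContinuousLinearMap.smul_apply, smul_eq_mul, hn'e, hPce,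
      hPcval x, Function.comp]
  rw [laplacian]
  have hterm : ∀ i : Fin 3,
      d1 ‖x‖ * (‖x‖⁻¹ * 1 + (x i) * (-(‖x‖^2)⁻¹ * (‖x‖⁻¹ * x i)))
        + (‖x‖⁻¹ * x i) * (d2x * (‖x‖⁻¹ * x i))
      = d1 ‖x‖ * ‖x‖⁻¹
        + (d1 ‖x‖ * (-(‖x‖^2)⁻¹ * ‖x‖⁻¹) + d2x * (‖x‖⁻¹ * ‖x‖⁻¹)) * (x i * x i) := by
    intro i; ring
  calc ∑ i : Fin 3, fderiv ℝ (fun y => fderiv ℝ W y (EuclideanSpace.single i 1)) x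
        (EuclideanSpace.single i 1)
      = ∑ i : Fin 3, (d1 ‖x‖ * ‖x‖⁻¹
        + (d1 ‖x‖ * (-(‖x‖^2)⁻¹ * ‖x‖⁻¹) + d2x * (‖x‖⁻¹ * ‖x‖⁻¹)) * (x i * x i)) := by
        refine Finset.sum_congr rfl fun i _ => ?_
        rw [key i, hterm i]
    _ = 3 * (d1 ‖x‖ * ‖x‖⁻¹)
        + (d1 ‖x‖ * (-(‖x‖^2)⁻¹ * ‖x‖⁻¹) + d2x * (‖x‖⁻¹ * ‖x‖⁻¹)) * ‖x‖ ^ 2 := by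
        rw [Finset.sum_add_distrib, Finset.sum_const, ← Finset.mul_sum, hsq]
        simp [Finset.card_univ]
    _ = d2x + 2 * d1 ‖x‖ / ‖x‖ := by
        field_simp
        ring


/-- local boundedness of a radial solution of `-ΔW = q(|x|) W`
near the origin, given `r² q(r) → 0` as `r → 0⁺` and `|x|^{1-ε} W(x) → 0`. -/
theorem almost_local_boundedness (ε r₀ : ℝ) (hε : ε ∈ Ioo (0 : ℝ) (1 / 2))
    (hr₀ : 0 < r₀) (q : ℝ → ℝ) (hqc : ContinuousOn q (Ioo 0 r₀))
    (hq : Tendsto (fun r => r ^ 2 * q r) (nhdsWithin 0 (Ioi 0)) (nhds 0))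
    (W : EuclideanSpace ℝ (Fin 3) → ℝ)
    (hrad : ∀ x y : EuclideanSpace ℝ (Fin 3), ‖x‖ = ‖y‖ → W x = W y)
    (hW : ContDiffOn ℝ 2 W {x : EuclideanSpace ℝ (Fin 3) | x ≠ 0 ∧ ‖x‖ < r₀})
    (heq : ∀ x : EuclideanSpace ℝ (Fin 3), x ≠ 0 → ‖x‖ < r₀ →
      -laplacian W x = q ‖x‖ * W x)
    (hWlim : Tendsto (fun x : EuclideanSpace ℝ (Fin 3) => ‖x‖ ^ (1 - ε) * W x)
      (nhdsWithin 0 {x : EuclideanSpace ℝ (Fin 3) | x ≠ 0}) (nhds 0)) :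
    ∃ r₁ ∈ Ioo 0 r₀, ∃ C₁ > (0 : ℝ), ∀ x : EuclideanSpace ℝ (Fin 3),
      x ≠ 0 → ‖x‖ < r₁ → |W x| ≤ C₁ * ‖x‖ ^ (-ε) := by
  obtain ⟨hε0, hε2⟩ := hε
  have hε1 : (0:ℝ) < 1 - ε := by linarith
  set e : EuclideanSpace ℝ (Fin 3) := EuclideanSpace.single 0 1 with he
  have hne : ‖e‖ = 1 := by rw [he]; simp
  have he0 : e ≠ 0 := by intro h; rw [h] at hne; simp at hne
  set w : ℝ → ℝ := fun r => W (r • e) with hw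
  have hWw : ∀ y : EuclideanSpace ℝ (Fin 3), y ≠ 0 → W y = w ‖y‖ := by
    intro y hy
    apply hrad
    rw [norm_smul, hne, Real.norm_eq_abs, abs_of_nonneg (norm_nonneg y), mul_one]
  have hsm : ∀ r : ℝ, 0 < r → ‖r • e‖ = r := by
    intro r hr
    rw [norm_smul, hne, Real.norm_eq_abs, abs_of_pos hr, mul_one]
  have hL : ContDiff ℝ 2 (fun r : ℝ => r • e) := contDiff_id.smul contDiff_const
  have hmaps : MapsTo (fun r : ℝ => r • e) (Ioo 0 r₀)
      {x : EuclideanSpace ℝ (Fin 3) | x ≠ 0 ∧ ‖x‖ < r₀} := by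
    intro r hr
    refine ⟨smul_ne_zero (ne_of_gt hr.1) he0, ?_⟩
    rw [hsm r hr.1]; exact hr.2
  have hwC : ContDiffOn ℝ 2 w (Ioo 0 r₀) := hW.comp hL.contDiffOn hmaps
  set d1 : ℝ → ℝ := deriv w with hd1def
  have hd1C : ContDiffOn ℝ 1 d1 (Ioo 0 r₀) := hwC.deriv_of_isOpen isOpen_Ioo (by norm_num)
  have hwdiff : ∀ r ∈ Ioo (0:ℝ) r₀, HasDerivAt w (d1 r) r := fun r hr =>
    ((hwC.differentiableOn (by norm_num)).differentiableAt (isOpen_Ioo.mem_nhds hr)).hasDerivAt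
  have hd1diff : ∀ r ∈ Ioo (0:ℝ) r₀, HasDerivAt d1 (deriv d1 r) r := fun r hr =>
    ((hd1C.differentiableOn one_ne_zero).differentiableAt (isOpen_Ioo.mem_nhds hr)).hasDerivAt
  -- the radial ODE
  have hODE : ∀ r ∈ Ioo (0:ℝ) r₀, deriv d1 r + 2 * d1 r / r = -(q r * w r) := by
    intro r hr
    have hx0 : (r • e) ≠ 0 := smul_ne_zero (ne_of_gt hr.1) he0
    have hxn : ‖r • e‖ = r := hsm r hr.1
    have hd2' : HasDerivAt d1 (deriv d1 r) ‖r • e‖ := by rw [hxn]; exact hd1diff r hr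
    have hlap := radial_laplacian W w d1 r₀ hWw hwdiff hx0 (by rw [hxn]; exact hr.2) hd2'
    have h2 := heq (r • e) hx0 (by rw [hxn]; exact hr.2)
    rw [hlap, hxn] at h2
    have h3 : W (r • e) = w r := rfl
    rw [h3] at h2
    linarith [h2]
  set u : ℝ → ℝ := fun r => r * w r with hu
  set v : ℝ → ℝ := fun r => w r + r * d1 r with hv
  have huv : ∀ r ∈ Ioo (0:ℝ) r₀, HasDerivAt u (v r) r := by
    intro r hr
    have h := (hasDerivAt_id r).mul (hwdiff r hr)
    have : v r = 1 * w r + r * d1 r := by simp only [hv]; ring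
    rw [this]
    exact h
  have hvg : ∀ r ∈ Ioo (0:ℝ) r₀, HasDerivAt v (-(q r * u r)) r := by
    intro r hr
    have hr0 : (r:ℝ) ≠ 0 := ne_of_gt hr.1
    have h := (hwdiff r hr).add ((hasDerivAt_id r).mul (hd1diff r hr))
    have keyeq : d1 r + (1 * d1 r + r * deriv d1 r) = -(q r * u r) := by
      have hode := hODE r hr
      have hder : deriv d1 r = -(q r * w r) - 2 * d1 r / r := by linarith [hode]
      rw [hder]
      simp only [hu]
      field_simp
      ring
    rw [← keyeq]
    exact h
  -- limit of u
  have hulim : Tendsto (fun r : ℝ => r ^ (-ε) * (r * w r)) (nhdsWithin 0 (Ioi 0)) (nhds 0) := by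
    have hcomp : Tendsto (fun r : ℝ => r • e) (nhdsWithin 0 (Ioi 0))
        (nhdsWithin 0 {x : EuclideanSpace ℝ (Fin 3) | x ≠ 0}) := by
      apply tendsto_nhdsWithin_of_tendsto_nhds_of_eventually_within
      · have h0 : Tendsto (fun r : ℝ => r • e) (nhds 0) (nhds 0) := by
          exact (continuous_id.smul (continuous_const : Continuous fun _ : ℝ => e) :
            Continuous fun r : ℝ => r • e).tendsto' (0:ℝ) 0 (zero_smul ℝ e)
        exact h0.mono_left nhdsWithin_le_nhds
      · filter_upwards [self_mem_nhdsWithin] with r hr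
        exact smul_ne_zero (ne_of_gt hr) he0
    have h1 := hWlim.comp hcomp
    refine Tendsto.congr' ?_ h1
    filter_upwards [self_mem_nhdsWithin] with r hr
    simp only [Function.comp_apply]
    rw [hsm r hr]
    have h3 : W (r • e) = w r := rfl
    rw [h3, show (1-ε) = -ε + 1 by ring, Real.rpow_add hr, Real.rpow_one]
    ring
  have hδ0 : 0 < ε * (1-ε) / 2 := div_pos (mul_pos hε0 hε1) two_pos
  have hev : ∀ᶠ r in nhdsWithin (0:ℝ) (Ioi 0),
      |r ^ 2 * q r| ≤ ε*(1-ε)/2 ∧ |r ^ (-ε) * (r * w r)| ≤ 1 := by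
    have e1 := Metric.tendsto_nhds.mp hq _ hδ0
    have e2 := Metric.tendsto_nhds.mp hulim _ one_pos
    filter_upwards [e1, e2] with r h1 h2
    rw [Real.dist_eq, sub_zero] at h1 h2
    exact ⟨h1.le, h2.le⟩
  obtain ⟨c, hc0, hc⟩ := mem_nhdsGT_iff_exists_Ioo_subset.mp hev
  rw [mem_Ioi] at hc0
  set r₁ : ℝ := min (min (r₀/2) 1) (c/2) with hr₁def
  have hr₁0 : 0 < r₁ := lt_min (lt_min (by linarith) one_pos) (by linarith)
  have hr₁r₀ : r₁ < r₀ :=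
    lt_of_le_of_lt (le_trans (min_le_left _ _) (min_le_left _ _)) (by linarith)
  have hr₁1 : r₁ ≤ 1 := le_trans (min_le_left _ _) (min_le_right _ _)
  have hr₁c : r₁ < c := lt_of_le_of_lt (min_le_right _ _) (by linarith)
  have hsub : Ioc (0:ℝ) r₁ ⊆ Ioo 0 r₀ := fun s hs => ⟨hs.1, lt_of_le_of_lt hs.2 hr₁r₀⟩
  have hsubc : Ioc (0:ℝ) r₁ ⊆ Ioo 0 c := fun s hs => ⟨hs.1, lt_of_le_of_lt hs.2 hr₁c⟩
  have hgc : ContinuousOn (fun s => -(q s * u s)) (Ioc (0:ℝ) r₁) := by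
    apply ContinuousOn.neg
    apply ContinuousOn.mul (hqc.mono hsub)
    have : ContinuousOn (fun s : ℝ => s * w s) (Ioc (0:ℝ) r₁) :=
      continuousOn_id.mul ((hwC.continuousOn).mono hsub)
    exact this
  have hgb : ∀ s ∈ Ioc (0:ℝ) r₁,
      |(-(q s * u s))| ≤ ε*(1-ε)/2 * (s ^ (-(2:ℝ)) * |u s|) := by
    intro s hs
    have hs0 : 0 < s := hs.1
    have hP := hc (hsubc hs)
    have h1 : |s ^ 2 * q s| ≤ ε*(1-ε)/2 := hP.1
    have hs2 : (0:ℝ) < s ^ 2 := by positivity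
    rw [abs_neg, abs_mul]
    have hqs : |q s| ≤ (ε*(1-ε)/2) * (s^2)⁻¹ := by
      rw [abs_mul, abs_of_pos hs2] at h1
      rw [← div_eq_mul_inv, le_div_iff₀ hs2]
      linarith [h1]
    have hrp : s ^ (-(2:ℝ)) = (s^2)⁻¹ := by
      rw [Real.rpow_neg hs0.le, show ((2:ℝ)) = ((2:ℕ):ℝ) by norm_num, Real.rpow_natCast]
    calc |q s| * |u s| ≤ ((ε*(1-ε)/2) * (s^2)⁻¹) * |u s| :=
          mul_le_mul_of_nonneg_right hqs (abs_nonneg _)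
      _ = ε*(1-ε)/2 * (s ^ (-(2:ℝ)) * |u s|) := by rw [hrp]; ring
  have hub : ∀ s ∈ Ioc (0:ℝ) r₁, |u s| ≤ s ^ ε := by
    intro s hs
    have hs0 : 0 < s := hs.1
    have h2 : |s ^ (-ε) * (s * w s)| ≤ 1 := (hc (hsubc hs)).2
    have hse : (0:ℝ) < s ^ ε := Real.rpow_pos_of_pos hs0 _
    have hid : u s = s ^ ε * (s ^ (-ε) * (s * w s)) := by
      simp only [hu]
      rw [← mul_assoc, ← Real.rpow_add hs0]
      simp
    rw [hid, abs_mul, abs_of_pos hse]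
    calc s ^ ε * |s ^ (-ε) * (s * w s)| ≤ s ^ ε * 1 := mul_le_mul_of_nonneg_left h2 hse.le
      _ = s ^ ε := mul_one _
  have hbound := ode_bound ε r₁ hε0 hε2 hr₁0 hr₁1 u v (fun s => -(q s * u s))
    (fun s hs => huv s (hsub hs)) (fun s hs => hvg s (hsub hs)) hgc hgb hub
  refine ⟨r₁, ⟨hr₁0, hr₁r₀⟩, 2 * (|v r₁| + 1), by positivity, ?_⟩
  intro x hx hxr
  have hN : 0 < ‖x‖ := norm_pos_iff.2 hx
  have hmem : ‖x‖ ∈ Ioc (0:ℝ) r₁ := ⟨hN, hxr.le⟩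
  have h3 := hbound ‖x‖ hmem
  rw [hWw x hx]
  have h4 : |u ‖x‖| = ‖x‖ * |w ‖x‖| := by
    simp only [hu]
    rw [abs_mul, abs_of_pos hN]
  have h5 : ‖x‖ ^ (1 - ε) = ‖x‖ * ‖x‖ ^ (-ε) := by
    rw [show (1-ε) = 1 + -ε by ring, Real.rpow_add hN, Real.rpow_one]
  rw [h4, h5] at h3
  have h6 : ‖x‖ * |w ‖x‖| ≤ ‖x‖ * (2*(|v r₁|+1) * ‖x‖^(-ε)) := by linarith [h3]
  exact (mul_le_mul_iff_right₀ hN).mp h6
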